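/- Let n ≥ 1 and let A be a real n×n matrix that is eventually positive. Then the matrix exponential exp(A) is eventually positive. -/

import Mathlib

open Polynomial Matrix
open scoped Nat

/-- The spectral radius of a real matrix: the maximum of the moduli of the complex
roots of its characteristic polynomial. -/
noncomputable def specRadius {n : ℕ} (A : Matrix (Fin n) (Fin n) ℝ) : ℝ :=
  (((A.charpoly.map (algebraMap ℝ ℂ)).roots.map (fun z => ‖z‖₊)).sup : NNReal)

/-- The strong Perron–Frobenius property for a real matrix. -/
def HasStrongPF {n : ℕ} (A : Matrix (Fin n) (Fin n) ℝ) : Prop :=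
  0 < specRadius A ∧
  (A.charpoly.map (algebraMap ℝ ℂ)).rootMultiplicity (specRadius A : ℂ) = 1 ∧
  (∃ x : Fin n → ℝ, (∀ i, 0 < x i) ∧ A.mulVec x = (specRadius A) • x) ∧
  (∀ μ ∈ (A.charpoly.map (algebraMap ℝ ℂ)).roots,
      μ ≠ (specRadius A : ℂ) → ‖μ‖ < specRadius A)

/-- Eventual positivity of a real matrix. -/
def EventuallyPos {n : ℕ} (A : Matrix (Fin n) (Fin n) ℝ) : Prop :=
  ∃ p : ℕ, ∀ k ≥ p, ∀ i j, 0 < (A ^ k) i j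

section aux

open NormedSpace

lemma exp_entry_summable {n : ℕ} (B : Matrix (Fin n) (Fin n) ℝ) (i j : Fin n) :
    Summable fun m : ℕ => ((m ! : ℝ)⁻¹ • B ^ m) i j := by
  letI : NormedRing (Matrix (Fin n) (Fin n) ℝ) := Matrix.linftyOpNormedRing
  letI : NormedAlgebra ℝ (Matrix (Fin n) (Fin n) ℝ) := Matrix.linftyOpNormedAlgebra
  have h : Summable fun m : ℕ => (m ! : ℝ)⁻¹ • B ^ m := expSeries_summable' B
  exact (Pi.summable.mp ((Pi.summable.mp h) i)) j

lemma exp_entry {n : ℕ} (B : Matrix (Fin n) (Fin n) ℝ) (i j : Fin n) :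
    exp B i j = ∑' m : ℕ, ((m ! : ℝ)⁻¹ • B ^ m) i j := by
  letI : NormedRing (Matrix (Fin n) (Fin n) ℝ) := Matrix.linftyOpNormedRing
  letI : NormedAlgebra ℝ (Matrix (Fin n) (Fin n) ℝ) := Matrix.linftyOpNormedAlgebra
  have h : Summable fun m : ℕ => (m ! : ℝ)⁻¹ • B ^ m := expSeries_summable' B
  have he : exp B = ∑' m : ℕ, (m ! : ℝ)⁻¹ • B ^ m := by rw [exp_eq_tsum ℝ]
  rw [he]
  erw [tsum_apply h, tsum_apply (Pi.summable.mp h i)]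

end aux

lemma exp_pow_entry {n : ℕ} (A : Matrix (Fin n) (Fin n) ℝ) (k : ℕ) (i j : Fin n) :
    (NormedSpace.exp A ^ k) i j = ∑' m : ℕ, (m ! : ℝ)⁻¹ * (k : ℝ) ^ m * (A ^ m) i j := by
  rw [← Matrix.exp_nsmul, exp_entry]
  congr 1
  funext m
  have hkA : (k : ℕ) • A = (k : ℝ) • A := (Nat.cast_smul_eq_nsmul ℝ k A).symm
  rw [hkA, _root_.smul_pow, smul_smul, Matrix.smul_apply, smul_eq_mul]

lemma entry_series_summable {n : ℕ} (A : Matrix (Fin n) (Fin n) ℝ) (k : ℕ) (i j : Fin n) :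
    Summable fun m : ℕ => (m ! : ℝ)⁻¹ * (k : ℝ) ^ m * (A ^ m) i j := by
  have h := exp_entry_summable ((k : ℝ) • A) i j
  convert h using 2 with m
  rw [_root_.smul_pow, smul_smul, Matrix.smul_apply, smul_eq_mul]


set_option maxHeartbeats 1000000 in
/-- The matrix exponential preserves eventual positivity. -/
theorem eventuallyPos_exp {n : ℕ} (hn : 1 ≤ n) (A : Matrix (Fin n) (Fin n) ℝ)
    (hA : EventuallyPos A) :
    EventuallyPos (NormedSpace.exp A) := by
  obtain ⟨p₀, hp₀⟩ := hA
  set p := p₀ + 1 with hpdef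
  have hp : ∀ k ≥ p, ∀ i j, 0 < (A ^ k) i j := fun k hk => hp₀ k (le_trans (Nat.le_succ _) hk)
  -- per-entry eventual positivity
  have H : ∀ i j : Fin n, ∀ᶠ k : ℕ in Filter.atTop, 0 < (NormedSpace.exp A ^ k) i j := by
    intro i j
    set C : ℝ := ∑ m ∈ Finset.range p, |(A ^ m) i j| with hC
    set c : ℝ := (p ! : ℝ)⁻¹ * (A ^ p) i j with hc
    have hcpos : 0 < c := mul_pos (by positivity) (hp p le_rfl i j)
    rw [Filter.eventually_atTop]
    refine ⟨max 1 (⌈C / c⌉₊ + 1), fun k hk => ?_⟩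
    have hk1 : 1 ≤ k := le_trans (le_max_left _ _) hk
    have hk1' : (1 : ℝ) ≤ (k : ℝ) := by exact_mod_cast hk1
    have hkc : C / c < (k : ℝ) :=
      Nat.lt_of_ceil_lt (lt_of_lt_of_le (Nat.lt_succ_self _) (le_trans (le_max_right _ _) hk))
    have hkc' : C < (k : ℝ) * c := by
      rw [div_lt_iff₀ hcpos] at hkc
      linarith [hkc]
    rw [exp_pow_entry A k i j]
    set f : ℕ → ℝ := fun m => (m ! : ℝ)⁻¹ * (k : ℝ) ^ m * (A ^ m) i j with hf
    have hfs : Summable f := entry_series_summable A k i j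
    rw [← Summable.sum_add_tsum_nat_add p hfs]
    -- tail bound
    have hnn : ∀ m : ℕ, 0 ≤ f (m + p) := by
      intro m
      have h3 := hp (m + p) (Nat.le_add_left _ _) i j
      have h1 : (0 : ℝ) ≤ ((m + p)! : ℝ)⁻¹ := by positivity
      have h2 : (0 : ℝ) ≤ (k : ℝ) ^ (m + p) := by positivity
      exact mul_nonneg (mul_nonneg h1 h2) h3.le
    have htail : (k : ℝ) ^ p * c ≤ ∑' m : ℕ, f (m + p) := by
      have h0 : (k : ℝ) ^ p * c = f (0 + p) := by
        simp only [hf, hc, zero_add]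
        ring
      have hs : Summable fun m => f (m + p) := (summable_nat_add_iff p).mpr hfs
      rw [h0]
      exact Summable.le_tsum hs 0 (fun m _ => hnn m)
    -- head bound
    have hhead : -((k : ℝ) ^ (p - 1) * C) ≤ ∑ m ∈ Finset.range p, f m := by
      have habs : |∑ m ∈ Finset.range p, f m| ≤ (k : ℝ) ^ (p - 1) * C := by
        calc |∑ m ∈ Finset.range p, f m| ≤ ∑ m ∈ Finset.range p, |f m| :=
              Finset.abs_sum_le_sum_abs _ _
          _ ≤ ∑ m ∈ Finset.range p, (k : ℝ) ^ (p - 1) * |(A ^ m) i j| := by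
              apply Finset.sum_le_sum
              intro m hm
              simp only [hf, abs_mul]
              have h1 : |((m ! : ℝ))⁻¹| ≤ 1 := by
                rw [abs_of_nonneg (by positivity), inv_le_one_iff₀]
                right
                exact_mod_cast Nat.factorial_pos m
              have h2 : |(k : ℝ) ^ m| ≤ (k : ℝ) ^ (p - 1) := by
                rw [abs_of_nonneg (by positivity)]
                apply pow_le_pow_right₀ hk1'
                have := Finset.mem_range.mp hm
                omega
              calc |((m ! : ℝ))⁻¹| * |(k : ℝ) ^ m| * |(A ^ m) i j|
                  ≤ 1 * ((k : ℝ) ^ (p - 1)) * |(A ^ m) i j| :=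
                    mul_le_mul_of_nonneg_right
                      (mul_le_mul h1 h2 (abs_nonneg _) zero_le_one) (abs_nonneg _)
                _ = (k : ℝ) ^ (p - 1) * |(A ^ m) i j| := by ring
          _ = (k : ℝ) ^ (p - 1) * C := by rw [hC, Finset.mul_sum]
      linarith [neg_abs_le (∑ m ∈ Finset.range p, f m), habs]
    have hdom : (k : ℝ) ^ (p - 1) * C < (k : ℝ) ^ p * c := by
      have hkp : (k : ℝ) ^ p = (k : ℝ) ^ (p - 1) * (k : ℝ) := by
        rw [← pow_succ, Nat.sub_add_cancel (by omega : 1 ≤ p)]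
      have hkpow : (0 : ℝ) < (k : ℝ) ^ (p - 1) := by positivity
      rw [hkp, mul_assoc]
      exact mul_lt_mul_of_pos_left hkc' hkpow
    linarith [htail, hhead, hdom]
  -- combine over finitely many entries
  have H2 : ∀ᶠ k : ℕ in Filter.atTop, ∀ i j, 0 < (NormedSpace.exp A ^ k) i j := by
    rw [Filter.eventually_all]
    intro i
    rw [Filter.eventually_all]
    exact H i
  obtain ⟨N, hN⟩ := Filter.eventually_atTop.mp H2
  exact ⟨N, hN⟩
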